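/- Let ⟨A,·⟩ be a semigroup which is an Abelian algebra. Then ⟨A,·⟩ is a Hamiltonian algebra if and only if ⟨A,·⟩ is an inflation of a subsemigroup that is a rectangular band of periodic Abelian groups (Abelian groups in which every element has finite order) and the product of any two idempotents of A is an idempotent. -/

import Mathlib

set_option linter.unusedSectionVars false
set_option maxHeartbeats 1000000


universe u

/-- Terms (polynomial operations) of a groupoid `⟨A, op⟩` in `n` variables,
built from variables, constants and the binary operation. -/
inductive GTerm (A : Type u) (n : ℕ) : Type u where
  | var : Fin n → GTerm A n
  | const : A → GTerm A n
  | mul : GTerm A n → GTerm A n → GTerm A n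

/-- Evaluation of a term under the binary operation `op` and an assignment of variables. -/
def GTerm.eval {A : Type u} (op : A → A → A) : {n : ℕ} → GTerm A n → (Fin n → A) → A
  | _, .var i, v => v i
  | _, .const a, _ => a
  | _, .mul s t, v => op (GTerm.eval op s v) (GTerm.eval op t v)

/-- A groupoid `⟨A, op⟩` is an Abelian algebra: for every polynomial operation
`t(x, y₁, …, yₙ)` and all elements `u, v, c₁, …, cₙ, d₁, …, dₙ`,
`t(u, c̄) = t(u, d̄)` implies `t(v, c̄) = t(v, d̄)`. -/
def IsAbelianGroupoid {A : Type u} (op : A → A → A) : Prop :=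
  ∀ (n : ℕ) (t : GTerm A (n + 1)) (u v : A) (c d : Fin n → A),
    t.eval op (Fin.cons u c) = t.eval op (Fin.cons u d) →
    t.eval op (Fin.cons v c) = t.eval op (Fin.cons v d)

/-- A groupoid `⟨A, op⟩` is a Hamiltonian algebra: every subalgebra (nonempty subset
closed under `op`) is an equivalence class of some congruence on `⟨A, op⟩`. -/
def IsHamiltonianGroupoid {A : Type u} (op : A → A → A) : Prop :=
  ∀ B : Set A, B.Nonempty → (∀ x ∈ B, ∀ y ∈ B, op x y ∈ B) →
    ∃ θ : A → A → Prop, Equivalence θ ∧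
      (∀ a b c d : A, θ a b → θ c d → θ (op a c) (op b d)) ∧
      ∃ a : A, B = {x : A | θ x a}

/-- `opPow op a n` is the power `a^(n+1)` of `a` with respect to the operation `op`. -/
def opPow {A : Type u} (op : A → A → A) (a : A) : ℕ → A
  | 0 => a
  | n + 1 => op a (opPow op a n)

/-- The semigroup `⟨A, op⟩` is an inflation of the subsemigroup on `B ⊆ A`:
`B` is closed under `op` and there is a partition `{X b : b ∈ B}` of `A` with
`b ∈ X b` and `x·y = b·b'` whenever `x ∈ X b`, `y ∈ X b'`. -/
def IsInflation {A : Type u} (op : A → A → A) (B : Set A) : Prop :=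
  (∀ x ∈ B, ∀ y ∈ B, op x y ∈ B) ∧
  ∃ X : B → Set A,
    (∀ b : B, (b : A) ∈ X b) ∧
    (∀ a : A, ∃! b : B, a ∈ X b) ∧
    (∀ b b' : B, ∀ x ∈ X b, ∀ y ∈ X b', op x y = op (b : A) (b' : A))

/-- The subset `S` of the semigroup `⟨A, op⟩` is closed under `op` and forms a
periodic Abelian group under `op` (every element has finite order). -/
def IsPeriodicAbelianGroupOn {A : Type u} (op : A → A → A) (S : Set A) : Prop :=
  (∀ x ∈ S, ∀ y ∈ S, op x y ∈ S) ∧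
  ∃ e ∈ S, (∀ x ∈ S, op e x = x ∧ op x e = x) ∧
    (∀ x ∈ S, ∃ y ∈ S, op x y = e) ∧
    (∀ x ∈ S, ∀ y ∈ S, op x y = op y x) ∧
    (∀ x ∈ S, ∃ n : ℕ, opPow op x n = e)

/-- The set `T ⊆ A` equipped with `op` is a rectangular band of periodic Abelian
groups. -/
def IsRectBandOfPeriodicAbelianGroupsOn {A : Type u} (op : A → A → A) (T : Set A) : Prop :=
  ∃ (ι κ : Type u) (P : ι → κ → Set A),
    (∀ (i : ι) (l : κ), (P i l).Nonempty ∧ P i l ⊆ T) ∧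
    (∀ a ∈ T, ∃! p : ι × κ, a ∈ P p.1 p.2) ∧
    (∀ (i : ι) (l : κ), IsPeriodicAbelianGroupOn op (P i l)) ∧
    (∀ (i j : ι) (l m : κ), ∀ x ∈ P i l, ∀ y ∈ P j m, op x y ∈ P i m)

namespace S19
variable {A : Type u} {op : A → A → A}
lemma tcL (hab : IsAbelianGroupoid op) {u c d : A} (h : op u c = op u d) (v : A) :
    op v c = op v d := by
  have := hab 1 (.mul (.var 0) (.var 1)) u v ![c] ![d]
  simp only [GTerm.eval, Fin.cons_zero, Fin.cons_one] at this
  exact this h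
lemma tcR (hab : IsAbelianGroupoid op) {u c d : A} (h : op c u = op d u) (v : A) :
    op c v = op d v := by
  have := hab 1 (.mul (.var 1) (.var 0)) u v ![c] ![d]
  simp only [GTerm.eval, Fin.cons_zero, Fin.cons_one] at this
  exact this h
lemma tc3 (hab : IsAbelianGroupoid op) {u c1 c2 d1 d2 : A}
    (h : op (op c1 u) c2 = op (op d1 u) d2) (v : A) :
    op (op c1 v) c2 = op (op d1 v) d2 := by
  have := hab 2 (.mul (.mul (.var 1) (.var 0)) (.var 2)) u v ![c1, c2] ![d1, d2]
  simp only [GTerm.eval, Fin.cons_zero, Fin.cons_one] at this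
  exact this h
lemma tcXYX (hab : IsAbelianGroupoid op) {u c d : A}
    (h : op (op u c) u = op (op u d) u) (v : A) :
    op (op v c) v = op (op v d) v := by
  have := hab 1 (.mul (.mul (.var 0) (.var 1)) (.var 0)) u v ![c] ![d]
  simp only [GTerm.eval, Fin.cons_zero, Fin.cons_one] at this
  exact this h
lemma tcC (hab : IsAbelianGroupoid op) (w : A) {u c d : A}
    (h : op (op u c) w = op (op u d) w) (v : A) :
    op (op v c) w = op (op v d) w := by
  have := hab 1 (.mul (.mul (.var 0) (.var 1)) (.const w)) u v ![c] ![d]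
  simp only [GTerm.eval, Fin.cons_zero, Fin.cons_one] at this
  exact this h
lemma opPow_add (hassoc : ∀ a b c : A, op (op a b) c = op a (op b c)) (a : A) :
    ∀ m n, opPow op a (m + n + 1) = op (opPow op a m) (opPow op a n) := by
  intro m
  induction m with
  | zero => intro n; rw [Nat.zero_add]; rfl
  | succ k ih =>
    intro n
    have h1 : k + 1 + n + 1 = (k + n + 1) + 1 := by omega
    rw [h1]
    show op a (opPow op a (k + n + 1)) = op (op a (opPow op a k)) (opPow op a n)
    rw [ih n, hassoc]
lemma opPow_mul (hassoc : ∀ a b c : A, op (op a b) c = op a (op b c)) (a : A) (m : ℕ) :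
    ∀ n, opPow op (opPow op a m) n = opPow op a (m + n + m * n) := by
  intro n
  induction n with
  | zero => simp [opPow]
  | succ k ih =>
    show op (opPow op a m) (opPow op (opPow op a m) k) = _
    rw [ih, ← opPow_add hassoc]
    congr 1
    ring
lemma opPow_of_idem {a : A} (ha : op a a = a) : ∀ n, opPow op a n = a := by
  intro n
  induction n with
  | zero => rfl
  | succ k ih => show op a (opPow op a k) = a; rw [ih, ha]
lemma idem_pow_eq (hassoc : ∀ a b c : A, op (op a b) c = op a (op b c)) {z : A} {a b : ℕ}
    (ha : op (opPow op z a) (opPow op z a) = opPow op z a)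
    (hb : op (opPow op z b) (opPow op z b) = opPow op z b) :
    opPow op z a = opPow op z b := by
  have h1 : opPow op z (a + b + a * b) = opPow op z a := by
    rw [← opPow_mul hassoc]; exact opPow_of_idem ha b
  have h2 : opPow op z (b + a + b * a) = opPow op z b := by
    rw [← opPow_mul hassoc]; exact opPow_of_idem hb a
  have h3 : a + b + a * b = b + a + b * a := by ring
  rw [← h1, h3, h2]

/-! ### Idempotent calculus from abelianness -/

section Idem
variable (hassoc : ∀ a b c : A, op (op a b) c = op a (op b c))
    (hab : IsAbelianGroupoid op)
include hassoc hab

lemma vev {e f : A} (he : op e e = e) (hf : op f f = f) (v : A) :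
    op (op v e) v = op (op v f) v := by
  apply tcXYX hab (u := op e f)
  have hL : op (op (op e f) e) (op e f) = op (op e f) (op e f) := by
    rw [hassoc (op e f) e, ← hassoc e e f, he]
  have hR : op (op (op e f) f) (op e f) = op (op e f) (op e f) := by
    rw [hassoc e f f, hf]
  rw [hL, hR]

lemma fef {e f : A} (he : op e e = e) (hf : op f f = f) :
    op (op f e) f = f := by
  have := vev hassoc hab he hf f
  rw [hf] at this
  rw [this, hf]

lemma efe {e f : A} (he : op e e = e) (hf : op f f = f) :
    op (op e f) e = e := by
  have := vev hassoc hab he hf e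
  rw [he] at this
  rw [← this, he]

lemma idem_mul {e f : A} (he : op e e = e) (hf : op f f = f) :
    op (op e f) (op e f) = op e f := by
  rw [hassoc e f (op e f), ← hassoc f e f, fef hassoc hab he hf]

lemma rho_symm {e f : A} (he : op e e = e) (hf : op f f = f) (h : op e f = f) :
    op f e = e := by
  rw [← h, efe hassoc hab he hf]

lemma lam_symm {e f : A} (he : op e e = e) (hf : op f f = f) (h : op e f = e) :
    op f e = f := by
  conv_lhs => rw [← h]
  rw [← hassoc, fef hassoc hab he hf]

lemma rho_trans {e f g : A} (h1 : op e f = f) (h2 : op f g = g) : op e g = g := by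
  rw [← h2, ← hassoc, h1]

lemma lam_trans {e f g : A} (h1 : op e f = e) (h2 : op f g = f) : op e g = e := by
  rw [← h1, hassoc, h2]

/-- all idempotents sandwich the same way: `(x e) y = (x f) y`. -/
lemma sand_idem {e f : A} (he : op e e = e) (hf : op f f = f) (x y : A) :
    op (op x e) y = op (op x f) y := by
  apply tcC hab y (u := op x y)
  have h0 := vev hassoc hab he hf y
  have h1 : op x (op (op y e) y) = op x (op (op y f) y) := by rw [h0]
  calc op (op (op x y) e) y = op x (op (op y e) y) := by rw [hassoc x y e, hassoc]
    _ = op x (op (op y f) y) := h1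
    _ = op (op (op x y) f) y := by rw [← hassoc, ← hassoc x y f]

end Idem

/-! ### Universal periods -/

def InT (op : A → A → A) (z : A) : Prop := ∃ x y, op x y = z

def HasUP (op : A → A → A) : Prop :=
  ∀ x : A, ∃ p, 0 < p ∧ (∀ v, op v x = op v (opPow op x p)) ∧
    (∀ v, op x v = op (opPow op x p) v)

def Periodik (op : A → A → A) : Prop :=
  ∀ a : A, ∃ m p : ℕ, 0 < p ∧ opPow op a (m + p) = opPow op a m

lemma hasUP (hassoc : ∀ a b c : A, op (op a b) c = op a (op b c))
    (hab : IsAbelianGroupoid op) (hper : Periodik op) : HasUP op := by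
  intro a
  obtain ⟨m, p, hp, hmp⟩ := hper a
  refine ⟨p, hp, ?_, ?_⟩
  · cases m with
    | zero =>
      intro v
      have : opPow op a p = a := by rw [← Nat.zero_add p]; exact hmp
      rw [this]
    | succ k =>
      intro v
      apply tcL hab (u := opPow op a k)
      have h1 : op (opPow op a k) a = opPow op a (k + 1) := by
        have := opPow_add hassoc a k 0
        exact this.symm
      have h2 : op (opPow op a k) (opPow op a p) = opPow op a (k + 1) := by
        rw [← opPow_add hassoc]
        have : k + p + 1 = k + 1 + p := by omega
        rw [this, hmp]
      rw [h1, h2]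
  · cases m with
    | zero =>
      intro v
      have : opPow op a p = a := by rw [← Nat.zero_add p]; exact hmp
      rw [this]
    | succ k =>
      intro v
      apply tcR hab (u := opPow op a k)
      have h1 : op a (opPow op a k) = opPow op a (k + 1) := rfl
      have h2 : op (opPow op a p) (opPow op a k) = opPow op a (k + 1) := by
        rw [← opPow_add hassoc]
        have : p + k + 1 = k + 1 + p := by omega
        rw [this, hmp]
      rw [h1, h2]

noncomputable def up (H : HasUP op) (x : A) : ℕ := (H x).choose

lemma up_pos (H : HasUP op) (x : A) : 0 < up H x := (H x).choose_spec.1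

lemma upL (H : HasUP op) (x v : A) : op v x = op v (opPow op x (up H x)) :=
  (H x).choose_spec.2.1 v

lemma upR (H : HasUP op) (x v : A) : op x v = op (opPow op x (up H x)) v :=
  (H x).choose_spec.2.2 v

lemma up_redL (hassoc : ∀ a b c : A, op (op a b) c = op a (op b c)) (H : HasUP op)
    (x v : A) : ∀ n, op v (opPow op x (up H x + n)) = op v (opPow op x n) := by
  intro n
  induction n generalizing v with
  | zero => exact (upL H x v).symm
  | succ k ih =>
    show op v (op x (opPow op x (up H x + k))) = _
    rw [← hassoc, ih (op v x), hassoc]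
    rfl

lemma up_redR (hassoc : ∀ a b c : A, op (op a b) c = op a (op b c)) (H : HasUP op)
    (x v : A) : ∀ n, op (opPow op x (up H x + n)) v = op (opPow op x n) v := by
  intro n
  induction n generalizing v with
  | zero => exact (upR H x v).symm
  | succ k ih =>
    show op (op x (opPow op x (up H x + k))) v = _
    rw [hassoc, ih v, ← hassoc]
    rfl

section Creg
variable (hassoc : ∀ a b c : A, op (op a b) c = op a (op b c))
    (hab : IsAbelianGroupoid op) (H : HasUP op)
include hassoc hab

/-- Every product is completely regular with canonical period `up`. -/
lemma creg_can {z : A} (hz : InT op z) : z = opPow op z (up H z) := by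
  obtain ⟨x, y, rfl⟩ := hz
  set z := op x y with hz
  obtain ⟨q, hq⟩ : ∃ q, up H z = q + 1 := ⟨up H z - 1, by have := up_pos H z; omega⟩
  have hcu : op x (op y (opPow op z (2 * q + 1))) = opPow op z (2 * q + 2) := by
    rw [← hassoc, ← hz]
    have := opPow_add hassoc z 0 (2 * q + 1)
    rw [Nat.zero_add] at this
    have h2 : 2 * q + 1 + 1 = 2 * q + 2 := by omega
    rw [h2] at this
    exact this.symm
  have hdu : op (op (opPow op z q) x) (op y (opPow op z (2 * q + 1))) =
      opPow op z (3 * q + 3) := by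
    rw [hassoc, hcu, ← opPow_add hassoc]
    congr 1
    omega
  have hred : opPow op z (3 * q + 3) = opPow op z (2 * q + 2) := by
    have h1 : 3 * q + 3 = up H z + (2 * q + 2) := by omega
    rw [h1]
    show op z (opPow op z (up H z + (2*q+1))) = _
    rw [up_redL hassoc H z z (2*q+1)]
    rfl
  have hprem : op x (op y (opPow op z (2 * q + 1))) =
      op (op (opPow op z q) x) (op y (opPow op z (2 * q + 1))) := by
    rw [hcu, hdu, hred]
  have := tcR hab hprem y
  calc z = op x y := hz.symm
    _ = op (op (opPow op z q) x) y := this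
    _ = op (opPow op z q) z := by rw [hassoc, ← hz]
    _ = opPow op z (up H z) := by
        show op (opPow op z q) (opPow op z 0) = opPow op z (up H z)
        rw [← opPow_add hassoc]
        congr 1
        omega

end Creg

lemma creg_pow {z : A} {p : ℕ} (hc : z = opPow op z p) :
    ∀ n, opPow op z (p + n) = opPow op z n := by
  intro n
  induction n with
  | zero => exact hc.symm
  | succ k ih => show op z (opPow op z (p + k)) = _; rw [ih]; rfl

lemma creg_pow_mul {z : A} {p : ℕ} (hc : z = opPow op z p) :
    ∀ k n, opPow op z (k * p + n) = opPow op z n := by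
  intro k
  induction k with
  | zero => intro n; rw [Nat.zero_mul, Nat.zero_add]
  | succ j ih =>
    intro n
    have h1 : (j + 1) * p + n = p + (j * p + n) := by ring
    rw [h1, creg_pow hc, ih]

/-! ### the canonical idempotent and related functions -/

noncomputable def gg (H : HasUP op) (z : A) : A := opPow op z (up H z - 1)

noncomputable def ii (H : HasUP op) (z : A) : A := opPow op z (2 * (up H z - 1))

noncomputable def rr (H : HasUP op) (x : A) : A := opPow op x (2 * up H x)

lemma inT_pow {z : A} (hz : InT op z) (n : ℕ) : InT op (opPow op z n) := by
  cases n with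
  | zero => exact hz
  | succ k => exact ⟨z, opPow op z k, rfl⟩

lemma idem_gg_self (H : HasUP op) {z : A} (hz : op z z = z) : gg H z = z :=
  opPow_of_idem hz _

section GG
variable (hassoc : ∀ a b c : A, op (op a b) c = op a (op b c))
    (hab : IsAbelianGroupoid op) (H : HasUP op)
include hassoc hab

lemma g_idem {z : A} (hz : InT op z) : op (gg H z) (gg H z) = gg H z := by
  have hc := creg_can hassoc hab H hz
  obtain ⟨q, hq⟩ : ∃ q, up H z = q + 1 := ⟨up H z - 1, by have := up_pos H z; omega⟩
  show op (opPow op z (up H z - 1)) (opPow op z (up H z - 1)) = opPow op z (up H z - 1)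
  have hq' : up H z - 1 = q := by omega
  rw [hq', ← opPow_add hassoc]
  have h1 : q + q + 1 = up H z + q := by omega
  rw [h1]
  exact creg_pow hc q

lemma g_z {z : A} (hz : InT op z) : op (gg H z) z = z := by
  have hc := creg_can hassoc hab H hz
  obtain ⟨q, hq⟩ : ∃ q, up H z = q + 1 := ⟨up H z - 1, by have := up_pos H z; omega⟩
  show op (opPow op z (up H z - 1)) z = z
  have hq' : up H z - 1 = q := by omega
  rw [hq']
  show op (opPow op z q) (opPow op z 0) = opPow op z 0
  rw [← opPow_add hassoc]
  have h1 : q + 0 + 1 = up H z + 0 := by omega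
  rw [h1]
  exact creg_pow hc 0

lemma z_g {z : A} (hz : InT op z) : op z (gg H z) = z := by
  have hc := creg_can hassoc hab H hz
  obtain ⟨q, hq⟩ : ∃ q, up H z = q + 1 := ⟨up H z - 1, by have := up_pos H z; omega⟩
  show op z (opPow op z (up H z - 1)) = z
  have hq' : up H z - 1 = q := by omega
  rw [hq']
  show op (opPow op z 0) (opPow op z q) = opPow op z 0
  rw [← opPow_add hassoc]
  have h1 : 0 + q + 1 = up H z + 0 := by omega
  rw [h1]
  exact creg_pow hc 0

lemma z_inv {z : A} (hz : InT op z) : op z (ii H z) = gg H z := by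
  have hc := creg_can hassoc hab H hz
  obtain ⟨q, hq⟩ : ∃ q, up H z = q + 1 := ⟨up H z - 1, by have := up_pos H z; omega⟩
  show op z (opPow op z (2 * (up H z - 1))) = opPow op z (up H z - 1)
  have hq' : up H z - 1 = q := by omega
  rw [hq']
  show op (opPow op z 0) (opPow op z (2 * q)) = opPow op z q
  rw [← opPow_add hassoc]
  have h1 : 0 + 2 * q + 1 = up H z + q := by omega
  rw [h1]
  exact creg_pow hc q

lemma inv_z {z : A} (hz : InT op z) : op (ii H z) z = gg H z := by
  have hc := creg_can hassoc hab H hz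
  obtain ⟨q, hq⟩ : ∃ q, up H z = q + 1 := ⟨up H z - 1, by have := up_pos H z; omega⟩
  show op (opPow op z (2 * (up H z - 1))) z = opPow op z (up H z - 1)
  have hq' : up H z - 1 = q := by omega
  rw [hq']
  show op (opPow op z (2 * q)) (opPow op z 0) = opPow op z q
  rw [← opPow_add hassoc]
  have h1 : 2 * q + 0 + 1 = up H z + q := by omega
  rw [h1]
  exact creg_pow hc q

lemma g_of_pow {z : A} (hz : InT op z) (n : ℕ) : gg H (opPow op z n) = gg H z := by
  have h1 : gg H (opPow op z n) =
      opPow op z (n + (up H (opPow op z n) - 1) + n * (up H (opPow op z n) - 1)) := by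
    show opPow op (opPow op z n) (up H (opPow op z n) - 1) = _
    rw [opPow_mul hassoc]
  have ha : op (gg H (opPow op z n)) (gg H (opPow op z n)) = gg H (opPow op z n) :=
    g_idem hassoc hab H (inT_pow hz n)
  rw [h1] at ha ⊢
  have hb : op (gg H z) (gg H z) = gg H z := g_idem hassoc hab H hz
  exact idem_pow_eq hassoc ha hb

lemma r_fix {z : A} (hz : InT op z) : rr H z = z := by
  have hc := creg_can hassoc hab H hz
  show opPow op z (2 * up H z) = z
  have h1 : 2 * up H z = up H z + (up H z + 0) := by omega
  rw [h1, creg_pow hc, creg_pow hc]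
  rfl

omit hab in
lemma r_left (x v : A) : op v x = op v (rr H x) := by
  show _ = op v (opPow op x (2 * up H x))
  have h1 : 2 * up H x = up H x + up H x := by omega
  rw [h1, up_redL hassoc H x v]
  exact upL H x v

omit hab in
lemma r_right (x v : A) : op x v = op (rr H x) v := by
  show _ = op (opPow op x (2 * up H x)) v
  have h1 : 2 * up H x = up H x + up H x := by omega
  rw [h1, up_redR hassoc H x v]
  exact upR H x v

omit hab hassoc in
lemma r_inT (x : A) : InT op (rr H x) := by
  have := up_pos H x
  obtain ⟨k, hk⟩ : ∃ k, 2 * up H x = k + 1 := ⟨2 * up H x - 1, by omega⟩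
  show InT op (opPow op x (2 * up H x))
  rw [hk]
  exact ⟨x, opPow op x k, rfl⟩

omit hab in
lemma infl_mul (x y : A) : op x y = op (rr H x) (rr H y) :=
  (r_left hassoc H y x).trans (r_right hassoc H x (rr H y))

end GG

section Spade
variable (hassoc : ∀ a b c : A, op (op a b) c = op a (op b c))
    (hab : IsAbelianGroupoid op) (H : HasUP op)
include hassoc

lemma sandwich_pow (x y : A) :
    ∀ n, op (op x (opPow op (op y x) n)) y = opPow op (op x y) (n + 1) := by
  intro n
  induction n with
  | zero =>
    show op (op x (op y x)) y = op (op x y) (op x y)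
    rw [← hassoc x y x, hassoc (op x y) x y]
  | succ k ih =>
    show op (op x (op (op y x) (opPow op (op y x) k))) y = _
    rw [← hassoc x (op y x), ← hassoc x y x,
      hassoc (op x y) x (opPow op (op y x) k), hassoc (op x y)]
    rw [ih]
    rfl

include hab H

/-- Idempotents in the middle of a product vanish. -/
lemma spade (x y : A) {e : A} (he : op e e = e) : op (op x e) y = op x y := by
  set w := op y x with hw
  set z := op x y with hz
  have hcw : w = opPow op w (up H w) := creg_can hassoc hab H ⟨y, x, rfl⟩
  have hcz : z = opPow op z (up H z) := creg_can hassoc hab H ⟨x, y, rfl⟩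
  have hpos : 0 < up H w * up H z := Nat.mul_pos (up_pos H w) (up_pos H z)
  have hcm : up H w * up H z = up H z * up H w := Nat.mul_comm _ _
  obtain ⟨t, ht⟩ : ∃ t, up H w * up H z = t + 1 := ⟨up H w * up H z - 1, by omega⟩
  have hE : op (opPow op w t) (opPow op w t) = opPow op w t := by
    rw [← opPow_add hassoc]
    have h1 : t + t + 1 = up H z * up H w + t := by omega
    rw [h1]
    exact creg_pow_mul hcw (up H z) t
  have h2 : op (op x (opPow op w t)) y = z := by
    rw [sandwich_pow hassoc x y t]
    have h3 : t + 1 = up H w * up H z + 0 := by omega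
    rw [h3]
    exact creg_pow_mul hcz (up H w) 0
  rw [sand_idem hassoc hab he hE x y]
  exact h2

end Spade

/-! ### absorption -/

lemma absorbL (hassoc : ∀ a b c : A, op (op a b) c = op a (op b c)) {c z : A}
    (h : op c z = z) : ∀ n, op c (opPow op z n) = opPow op z n := by
  intro n
  cases n with
  | zero => exact h
  | succ k =>
    show op c (op z (opPow op z k)) = _
    rw [← hassoc, h]
    rfl

lemma absorbR (hassoc : ∀ a b c : A, op (op a b) c = op a (op b c)) {c z : A}
    (h : op z c = z) : ∀ n, op (opPow op z n) c = opPow op z n := by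
  intro n
  induction n with
  | zero => exact h
  | succ k ih =>
    show op (op z (opPow op z k)) c = _
    rw [hassoc, ih]
    rfl

lemma g_absorbL (hassoc : ∀ a b c : A, op (op a b) c = op a (op b c)) (H : HasUP op)
    {c z : A} (h : op c z = z) : op c (gg H z) = gg H z := absorbL hassoc h _

lemma g_absorbR (hassoc : ∀ a b c : A, op (op a b) c = op a (op b c)) (H : HasUP op)
    {c z : A} (h : op z c = z) : op (gg H z) c = gg H z := absorbR hassoc h _

/-- commutativity inside a maximal subgroup -/
lemma comm_of_g_eq (hassoc : ∀ a b c : A, op (op a b) c = op a (op b c))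
    (hab : IsAbelianGroupoid op) (H : HasUP op) {z w : A}
    (hz : InT op z) (hw : InT op w) (hg : gg H z = gg H w) : op z w = op w z := by
  have h1 : op (op z (ii H z)) w = op (op w (ii H z)) z := by
    rw [z_inv hassoc hab H hz, hassoc, inv_z hassoc hab H hz, hg,
      g_z hassoc hab H hw, z_g hassoc hab H hw]
  have h2 := tc3 hab h1 (gg H z)
  rw [z_g hassoc hab H hz] at h2
  rw [h2, hassoc, g_z hassoc hab H hz]

/-! ### the structure theorem under periodicity -/

lemma main_structs (hassoc : ∀ a b c : A, op (op a b) c = op a (op b c))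
    (hab : IsAbelianGroupoid op) (hper : Periodik op) :
    ∃ T : Set A, IsInflation op T ∧ IsRectBandOfPeriodicAbelianGroupsOn op T := by
  classical
  have H : HasUP op := hasUP hassoc hab hper
  set T : Set A := {z | ∃ x y, op x y = z} with hT
  have hTmem : ∀ z, z ∈ T ↔ InT op z := fun z => Iff.rfl
  refine ⟨T, ⟨fun x _ y _ => ⟨x, y, rfl⟩, ?_⟩, ?_⟩
  · -- inflation structure
    refine ⟨fun b => {a | rr H a = (b : A)}, fun b => ?_, fun a => ?_, ?_⟩
    · exact r_fix hassoc hab H b.2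
    · refine ⟨⟨rr H a, r_inT H a⟩, rfl, fun b hb => Subtype.ext hb.symm⟩
    · intro b b' x hx y hy
      rw [infl_mul hassoc H x y, hx, hy]
  · -- rectangular band structure
    set Es := {e : A // op e e = e} with hEs
    set sR : Setoid Es := ⟨fun e f => op e.1 f.1 = f.1,
      ⟨fun e => e.2, fun {e f} h => rho_symm hassoc hab e.2 f.2 h,
        fun {e f g} h1 h2 => rho_trans hassoc hab h1 h2⟩⟩ with hsR
    set sL : Setoid Es := ⟨fun e f => op e.1 f.1 = e.1,
      ⟨fun e => e.2, fun {e f} h => lam_symm hassoc hab e.2 f.2 h,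
        fun {e f g} h1 h2 => lam_trans hassoc hab h1 h2⟩⟩ with hsL
    refine ⟨Quotient sR, Quotient sL,
      fun i l => {z | ∃ h : InT op z ∧ op (gg H z) (gg H z) = gg H z,
        Quotient.mk sR ⟨gg H z, h.2⟩ = i ∧ Quotient.mk sL ⟨gg H z, h.2⟩ = l},
      ?_, ?_, ?_, ?_⟩
    · -- nonempty and contained in T
      intro i l
      obtain ⟨e, he⟩ := Quotient.exists_rep i
      obtain ⟨f, hf⟩ := Quotient.exists_rep l
      have hc : op (op e.1 f.1) (op e.1 f.1) = op e.1 f.1 := idem_mul hassoc hab e.2 f.2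
      have hgc : gg H (op e.1 f.1) = op e.1 f.1 := idem_gg_self H hc
      constructor
      · refine ⟨op e.1 f.1, ⟨⟨e.1, f.1, rfl⟩, by rw [hgc]; exact hc⟩, ?_, ?_⟩
        · rw [← he]
          refine (Quotient.sound ?_).symm
          show op e.1 (gg H (op e.1 f.1)) = gg H (op e.1 f.1)
          rw [hgc, ← hassoc, e.2]
        · rw [← hf]
          apply Quotient.sound
          show op (gg H (op e.1 f.1)) f.1 = gg H (op e.1 f.1)
          rw [hgc, hassoc, f.2]
      · rintro z ⟨⟨hz, _⟩, _⟩
        exact hz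
    · -- partition
      rintro a ha
      have hga := g_idem hassoc hab H ha
      refine ⟨(Quotient.mk sR ⟨gg H a, hga⟩, Quotient.mk sL ⟨gg H a, hga⟩),
        ⟨⟨ha, hga⟩, rfl, rfl⟩, ?_⟩
      rintro ⟨i, l⟩ ⟨⟨_, _⟩, h1, h2⟩
      simp only [Prod.mk.injEq]
      exact ⟨h1.symm, h2.symm⟩
    · -- groups
      intro i l
      obtain ⟨e, he⟩ := Quotient.exists_rep i
      obtain ⟨f, hf⟩ := Quotient.exists_rep l
      set c := op e.1 f.1 with hcdef
      have hc : op c c = c := idem_mul hassoc hab e.2 f.2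
      have hgc : gg H c = c := idem_gg_self H hc
      have hcT : InT op c := ⟨e.1, f.1, rfl⟩
      have hcP : ∃ h : InT op c ∧ op (gg H c) (gg H c) = gg H c,
          Quotient.mk sR ⟨gg H c, h.2⟩ = i ∧ Quotient.mk sL ⟨gg H c, h.2⟩ = l := by
        refine ⟨⟨hcT, by rw [hgc]; exact hc⟩, ?_, ?_⟩
        · rw [← he]
          refine (Quotient.sound ?_).symm
          show op e.1 (gg H c) = gg H c
          rw [hgc, hcdef, ← hassoc, e.2]
        · rw [← hf]
          apply Quotient.sound
          show op (gg H c) f.1 = gg H c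
          rw [hgc, hcdef, hassoc, f.2]
      -- every member has gg = c
      have key : ∀ z, (∃ h : InT op z ∧ op (gg H z) (gg H z) = gg H z,
          Quotient.mk sR ⟨gg H z, h.2⟩ = i ∧ Quotient.mk sL ⟨gg H z, h.2⟩ = l) →
          gg H z = c := by
        rintro z ⟨⟨hzT, hzg⟩, h1, h2⟩
        obtain ⟨⟨hcT', hcg⟩, hc1, hc2⟩ := hcP
        have e1 : op (gg H z) (gg H c) = gg H c :=
          Quotient.exact (h1.trans hc1.symm)
        have e2 : op (gg H z) (gg H c) = gg H z :=
          Quotient.exact (h2.trans hc2.symm)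
        rw [hgc] at e1 e2
        rw [← e2, e1]
      constructor
      · -- closure
        rintro z ⟨⟨hzT, hzg⟩, hz1, hz2⟩ w ⟨⟨hwT, hwg⟩, hw1, hw2⟩
        have hzwT : InT op (op z w) := ⟨z, w, rfl⟩
        have hga := g_idem hassoc hab H hzwT
        refine ⟨⟨hzwT, hga⟩, ?_, ?_⟩
        · rw [← hz1]
          refine (Quotient.sound ?_).symm
          show op (gg H z) (gg H (op z w)) = gg H (op z w)
          apply g_absorbL hassoc H
          rw [← hassoc, g_z hassoc hab H hzT]
        · rw [← hw2]
          apply Quotient.sound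
          show op (gg H (op z w)) (gg H w) = gg H (op z w)
          apply g_absorbR hassoc H
          rw [hassoc, z_g hassoc hab H hwT]
      · -- abelian group structure
        refine ⟨c, hcP, ?_, ?_, ?_, ?_⟩
        · rintro x hx
          have hk := key x hx
          obtain ⟨⟨hxT, _⟩, _, _⟩ := hx
          constructor
          · rw [← hk]; exact g_z hassoc hab H hxT
          · rw [← hk]; exact z_g hassoc hab H hxT
        · rintro x hx
          have hk := key x hx
          obtain ⟨⟨hxT, _⟩, hx1, hx2⟩ := hx
          refine ⟨ii H x, ?_, ?_⟩
          · -- ii H x is in P i l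
            have hiT : InT op (ii H x) := inT_pow hxT _
            have hgi : gg H (ii H x) = gg H x := g_of_pow hassoc hab H hxT _
            have hgidem : op (gg H (ii H x)) (gg H (ii H x)) = gg H (ii H x) :=
              g_idem hassoc hab H hiT
            refine ⟨⟨hiT, hgidem⟩, ?_, ?_⟩
            · rw [← hx1]
              congr 1
              exact Subtype.ext hgi
            · rw [← hx2]
              congr 1
              exact Subtype.ext hgi
          · rw [z_inv hassoc hab H hxT, hk]
        · rintro x hx y hy
          have hkx := key x hx
          have hky := key y hy
          obtain ⟨⟨hxT, _⟩, _, _⟩ := hx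
          obtain ⟨⟨hyT, _⟩, _, _⟩ := hy
          exact comm_of_g_eq hassoc hab H hxT hyT (hkx.trans hky.symm)
        · rintro x hx
          have hk := key x hx
          exact ⟨up H x - 1, hk⟩
    · -- band law
      rintro i j l m x ⟨⟨hxT, hxg⟩, hx1, hx2⟩ y ⟨⟨hyT, hyg⟩, hy1, hy2⟩
      have hzwT : InT op (op x y) := ⟨x, y, rfl⟩
      have hga := g_idem hassoc hab H hzwT
      refine ⟨⟨hzwT, hga⟩, ?_, ?_⟩
      · rw [← hx1]
        refine (Quotient.sound ?_).symm
        show op (gg H x) (gg H (op x y)) = gg H (op x y)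
        apply g_absorbL hassoc H
        rw [← hassoc, g_z hassoc hab H hxT]
      · rw [← hy2]
        apply Quotient.sound
        show op (gg H (op x y)) (gg H y) = gg H (op x y)
        apply g_absorbR hassoc H
        rw [hassoc, z_g hassoc hab H hyT]

/-! ### Hamiltonian property from abelianness + periodicity -/

lemma hamiltonian_of (hassoc : ∀ a b c : A, op (op a b) c = op a (op b c))
    (hab : IsAbelianGroupoid op) (hper : Periodik op) (B : Set A)
    (hBne : B.Nonempty) (hBcl : ∀ x ∈ B, ∀ y ∈ B, op x y ∈ B) :
    ∃ θ : A → A → Prop, Equivalence θ ∧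
      (∀ a b c d : A, θ a b → θ c d → θ (op a c) (op b d)) ∧
      ∃ a : A, B = {x : A | θ x a} := by
  classical
  have H : HasUP op := hasUP hassoc hab hper
  obtain ⟨b, hbB⟩ := hBne
  have pow_mem : ∀ x ∈ B, ∀ n, opPow op x n ∈ B := by
    intro x hx n
    induction n with
    | zero => exact hx
    | succ k ih => exact hBcl x hx _ ih
  set b₀ := op b b with hb₀def
  have hb₀B : b₀ ∈ B := hBcl b hbB b hbB
  have hb₀T : InT op b₀ := ⟨b, b, rfl⟩
  set ee := gg H b₀ with he_def
  have he_I : op ee ee = ee := g_idem hassoc hab H hb₀T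
  have he_B : ee ∈ B := pow_mem b₀ hb₀B _
  have he_T : InT op ee := inT_pow hb₀T _
  -- the group coordinate map
  set φ : A → A := fun x => op (op ee x) ee with hφdef
  have φ_l : ∀ x, op ee (φ x) = φ x := by
    intro x
    show op ee (op (op ee x) ee) = _
    rw [← hassoc, ← hassoc, he_I]
  have φ_r : ∀ x, op (φ x) ee = φ x := by
    intro x
    show op (op (op ee x) ee) ee = _
    rw [hassoc (op ee x), he_I]
  have φ_hom : ∀ x y, op (φ x) (φ y) = φ (op x y) := by
    intro x y
    show op (op (op ee x) ee) (op (op ee y) ee) = op (op ee (op x y)) ee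
    rw [spade hassoc hab H (op ee x) (op (op ee y) ee) he_I]
    rw [← hassoc (op ee x) (op ee y) ee]
    rw [← hassoc (op ee x) ee y]
    rw [spade hassoc hab H (op ee x) y he_I]
    rw [hassoc ee x y]
  have φ_pow : ∀ x n, opPow op (φ x) n = φ (opPow op x n) := by
    intro x n
    induction n with
    | zero => rfl
    | succ k ih =>
      show op (φ x) (opPow op (φ x) k) = _
      rw [ih, φ_hom]
      rfl
  have φ_T : ∀ x, InT op (φ x) := fun x => ⟨op ee x, ee, rfl⟩
  have φ_g : ∀ x, gg H (φ x) = ee := by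
    intro x
    have hgi : op (gg H (φ x)) (gg H (φ x)) = gg H (φ x) := g_idem hassoc hab H (φ_T x)
    have h1 : op ee (gg H (φ x)) = gg H (φ x) := g_absorbL hassoc H (φ_l x)
    have h2 : op (gg H (φ x)) ee = gg H (φ x) := g_absorbR hassoc H (φ_r x)
    have h3 := efe hassoc hab he_I hgi
    rw [h1, h2] at h3
    exact h3
  have phi_e : φ ee = ee := by
    show op (op ee ee) ee = ee
    rw [he_I, he_I]
  have φ_comm : ∀ x y, op (φ x) (φ y) = op (φ y) (φ x) := fun x y =>
    comm_of_g_eq hassoc hab H (φ_T x) (φ_T y) (by rw [φ_g, φ_g])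
  -- B ∩ T
  set BT : A → Prop := fun x => x ∈ B ∧ InT op x with hBTdef
  have hBTb₀ : BT b₀ := ⟨hb₀B, hb₀T⟩
  have hBTee : BT ee := ⟨he_B, he_T⟩
  have BT_mul : ∀ {x y}, BT x → BT y → BT (op x y) := fun hx hy =>
    ⟨hBcl _ hx.1 _ hy.1, ⟨_, _, rfl⟩⟩
  have BT_pow : ∀ {x}, BT x → ∀ n, BT (opPow op x n) := fun {x} hx n =>
    ⟨pow_mem x hx.1 n, inT_pow hx.2 n⟩
  have gI : ∀ {x : A}, InT op x → op (gg H x) (gg H x) = gg H x := fun hx =>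
    g_idem hassoc hab H hx
  -- the three coordinate relations
  set Row : A → A → Prop := fun x y => op (gg H x) (gg H y) = gg H y ∨
    ((∃ c, BT c ∧ op (gg H c) (gg H x) = gg H x) ∧
     (∃ c, BT c ∧ op (gg H c) (gg H y) = gg H y)) with hRowdef
  set Col : A → A → Prop := fun x y => op (gg H x) (gg H y) = gg H x ∨
    ((∃ c, BT c ∧ op (gg H x) (gg H c) = gg H x) ∧
     (∃ c, BT c ∧ op (gg H y) (gg H c) = gg H y)) with hColdef
  set Grp : A → A → Prop := fun x y => ∃ c, BT c ∧ φ x = op (φ y) (φ c) with hGrpdef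
  set θT : A → A → Prop := fun x y => Row x y ∧ Col x y ∧ Grp x y with hθTdef
  have Row_refl : ∀ {x}, InT op x → Row x x := fun hx => Or.inl (gI hx)
  have Col_refl : ∀ {x}, InT op x → Col x x := fun hx => Or.inl (gI hx)
  have Grp_refl : ∀ x, Grp x x := fun x => ⟨ee, hBTee, by rw [phi_e, φ_r]⟩
  have Row_symm : ∀ {x y}, InT op x → InT op y → Row x y → Row y x := by
    rintro x y hx hy (h | ⟨h1, h2⟩)
    · exact Or.inl (rho_symm hassoc hab (gI hx) (gI hy) h)
    · exact Or.inr ⟨h2, h1⟩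
  have Col_symm : ∀ {x y}, InT op x → InT op y → Col x y → Col y x := by
    rintro x y hx hy (h | ⟨h1, h2⟩)
    · exact Or.inl (lam_symm hassoc hab (gI hx) (gI hy) h)
    · exact Or.inr ⟨h2, h1⟩
  have Grp_symm : ∀ {x y}, Grp x y → Grp y x := by
    rintro x y ⟨c, hc, hxy⟩
    refine ⟨opPow op c (2 * (up H (φ c) - 1)), BT_pow hc _, ?_⟩
    have hpc : φ (opPow op c (2 * (up H (φ c) - 1))) = ii H (φ c) := (φ_pow c _).symm
    rw [hpc, hxy, hassoc, z_inv hassoc hab H (φ_T c), φ_g, φ_r]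
  have Row_trans : ∀ {x y z}, InT op x → InT op y → InT op z →
      Row x y → Row y z → Row x z := by
    rintro x y z hx hy hz (h | ⟨h1, h2⟩) (h' | ⟨h1', h2'⟩)
    · exact Or.inl (rho_trans hassoc hab h h')
    · refine Or.inr ⟨?_, h2'⟩
      obtain ⟨c, hc, hcx⟩ := h1'
      exact ⟨c, hc, rho_trans hassoc hab hcx
        (rho_symm hassoc hab (gI hx) (gI hy) h)⟩
    · refine Or.inr ⟨h1, ?_⟩
      obtain ⟨c, hc, hcy⟩ := h2
      exact ⟨c, hc, rho_trans hassoc hab hcy h'⟩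
    · exact Or.inr ⟨h1, h2'⟩
  have Col_trans : ∀ {x y z}, InT op x → InT op y → InT op z →
      Col x y → Col y z → Col x z := by
    rintro x y z hx hy hz (h | ⟨h1, h2⟩) (h' | ⟨h1', h2'⟩)
    · exact Or.inl (lam_trans hassoc hab h h')
    · refine Or.inr ⟨?_, h2'⟩
      obtain ⟨c, hc, hcy⟩ := h1'
      exact ⟨c, hc, lam_trans hassoc hab h hcy⟩
    · refine Or.inr ⟨h1, ?_⟩
      obtain ⟨c, hc, hcy⟩ := h2
      exact ⟨c, hc, lam_trans hassoc hab
        (lam_symm hassoc hab (gI hy) (gI hz) h') hcy⟩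
    · exact Or.inr ⟨h1, h2'⟩
  have Grp_trans : ∀ {x y z}, Grp x y → Grp y z → Grp x z := by
    rintro x y z ⟨c, hc, h1⟩ ⟨d, hd, h2⟩
    refine ⟨op d c, BT_mul hd hc, ?_⟩
    rw [h1, h2, hassoc, ← φ_hom d c]
  have Grp_compat : ∀ {x y u v}, Grp x y → Grp u v → Grp (op x u) (op y v) := by
    rintro x y u v ⟨c, hc, h1⟩ ⟨d, hd, h2⟩
    refine ⟨op c d, BT_mul hc hd, ?_⟩
    rw [← φ_hom x u, h1, h2, ← φ_hom y v, ← φ_hom c d,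
      hassoc (φ y) (φ c), hassoc (φ y) (φ v), ← hassoc (φ c) (φ v) (φ d),
      φ_comm c v, hassoc (φ v) (φ c) (φ d)]
  have row_step : ∀ {x : A} (u : A), InT op x →
      op (gg H x) (gg H (op x u)) = gg H (op x u) := by
    intro x u hx
    apply g_absorbL hassoc H
    rw [← hassoc, g_z hassoc hab H hx]
  have col_step : ∀ (x : A) {u : A}, InT op u →
      op (gg H (op x u)) (gg H u) = gg H (op x u) := by
    intro x u hu
    apply g_absorbR hassoc H
    rw [hassoc, z_g hassoc hab H hu]
  have Row_compat : ∀ {x y} (u v : A), InT op x → InT op y →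
      Row x y → Row (op x u) (op y v) := by
    rintro x y u v hx hy (h | ⟨⟨c, hc, h1⟩, ⟨c', hc', h2⟩⟩)
    · refine Or.inl ?_
      have s1 := row_step u hx
      have s2 := row_step v hy
      have t1 : op (gg H (op x u)) (gg H x) = gg H x :=
        rho_symm hassoc hab (gI hx) (gI ⟨x, u, rfl⟩) s1
      exact rho_trans hassoc hab (rho_trans hassoc hab t1 h) s2
    · exact Or.inr ⟨⟨c, hc, rho_trans hassoc hab h1 (row_step u hx)⟩,
        ⟨c', hc', rho_trans hassoc hab h2 (row_step v hy)⟩⟩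
  have Col_compat : ∀ (x y : A) {u v}, InT op u → InT op v →
      Col u v → Col (op x u) (op y v) := by
    rintro x y u v hu hv (h | ⟨⟨c, hc, h1⟩, ⟨c', hc', h2⟩⟩)
    · refine Or.inl ?_
      have s1 := col_step x hu
      have s2 := col_step y hv
      have t2 : op (gg H v) (gg H (op y v)) = gg H v :=
        lam_symm hassoc hab (gI (⟨y, v, rfl⟩ : InT op (op y v))) (gI hv) s2
      exact lam_trans hassoc hab (lam_trans hassoc hab s1 h) t2
    · exact Or.inr ⟨⟨c, hc, lam_trans hassoc hab (col_step x hu) h1⟩,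
        ⟨c', hc', lam_trans hassoc hab (col_step y hv) h2⟩⟩
  have θT_refl : ∀ {x}, InT op x → θT x x := fun hx =>
    ⟨Row_refl hx, Col_refl hx, Grp_refl _⟩
  have θT_symm : ∀ {x y}, InT op x → InT op y → θT x y → θT y x := by
    rintro x y hx hy ⟨h1, h2, h3⟩
    exact ⟨Row_symm hx hy h1, Col_symm hx hy h2, Grp_symm h3⟩
  have θT_trans : ∀ {x y z}, InT op x → InT op y → InT op z →
      θT x y → θT y z → θT x z := by
    rintro x y z hx hy hz ⟨h1, h2, h3⟩ ⟨h1', h2', h3'⟩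
    exact ⟨Row_trans hx hy hz h1 h1', Col_trans hx hy hz h2 h2', Grp_trans h3 h3'⟩
  have θT_compat : ∀ {x y u v}, InT op x → InT op y → InT op u → InT op v →
      θT x y → θT u v → θT (op x u) (op y v) := by
    rintro x y u v hx hy hu hv ⟨r1, c1, g1⟩ ⟨r2, c2, g2⟩
    exact ⟨Row_compat u v hx hy r1, Col_compat x y hu hv c2, Grp_compat g1 g2⟩
  -- membership characterization
  have mem_classT : ∀ {x}, x ∈ B → InT op x → θT x b₀ := by
    intro x hxB hxT
    refine ⟨Or.inr ⟨⟨x, ⟨hxB, hxT⟩, gI hxT⟩, ⟨b₀, hBTb₀, gI hb₀T⟩⟩,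
      Or.inr ⟨⟨x, ⟨hxB, hxT⟩, gI hxT⟩, ⟨b₀, hBTb₀, gI hb₀T⟩⟩, ?_⟩
    refine ⟨op (ii H b₀) x, ⟨hBcl _ (pow_mem b₀ hb₀B _) x hxB, ⟨_, _, rfl⟩⟩, ?_⟩
    rw [← φ_hom (ii H b₀) x, ← hassoc, φ_hom b₀ (ii H b₀),
      z_inv hassoc hab H hb₀T, ← he_def, phi_e, φ_l]
  have hrec : ∀ w, InT op w → op (op (gg H w) (φ w)) (gg H w) = w := by
    intro w hw
    show op (op (gg H w) (op (op ee w) ee)) (gg H w) = w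
    rw [← hassoc (gg H w) (op ee w) ee, ← hassoc (gg H w) ee w,
      spade hassoc hab H (op (op (gg H w) ee) w) (gg H w) he_I,
      spade hassoc hab H (gg H w) w he_I,
      g_z hassoc hab H hw, z_g hassoc hab H hw]
  have strip : ∀ X c Y, op (op X (φ c)) Y = op (op X c) Y := by
    intro X c Y
    show op (op X (op (op ee c) ee)) Y = _
    rw [← hassoc X (op ee c) ee, ← hassoc X ee c,
      spade hassoc hab H (op (op X ee) c) Y he_I,
      spade hassoc hab H X c he_I]
  have key_mem : ∀ {x}, InT op x → θT x b₀ → x ∈ B := by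
    rintro x hxT ⟨hRw, hCl, hGp⟩
    obtain ⟨b₁, hb₁, hb₁x⟩ : ∃ c, BT c ∧ op (gg H c) (gg H x) = gg H x := by
      rcases hRw with h | ⟨h1, _⟩
      · exact ⟨b₀, hBTb₀, rho_symm hassoc hab (gI hxT) (gI hb₀T) h⟩
      · exact h1
    obtain ⟨b₂, hb₂, hb₂x⟩ : ∃ c, BT c ∧ op (gg H x) (gg H c) = gg H x := by
      rcases hCl with h | ⟨h1, _⟩
      · exact ⟨b₀, hBTb₀, h⟩
      · exact h1
    obtain ⟨c, hc, hφx⟩ := hGp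
    have hφ3 : φ x = φ (op b₀ c) := by rw [hφx, φ_hom]
    have hx2 : x = op (op (gg H b₁) (op b₀ c)) (gg H b₂) := by
      have e0 : x = op (op (gg H x) (op b₀ c)) (gg H x) := by
        rw [← strip (gg H x) (op b₀ c) (gg H x), ← hφ3]
        exact (hrec x hxT).symm
      rw [e0]
      nth_rewrite 2 [← hb₂x]
      rw [← hassoc (op (gg H x) (op b₀ c)) (gg H x) (gg H b₂),
        spade hassoc hab H (op (gg H x) (op b₀ c)) (gg H b₂) (gI hxT),
        ← hb₁x,
        spade hassoc hab H (gg H b₁) (op b₀ c) (gI hxT)]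
    rw [hx2]
    exact hBcl _ (hBcl _ (pow_mem b₁ hb₁.1 _) _ (hBcl _ hb₀B _ hc.1)) _
      (pow_mem b₂ hb₂.1 _)
  -- the congruence
  set θ : A → A → Prop := fun x y => x = y ∨ (x ∈ B ∧ y ∈ B) ∨
    (InT op x ∧ InT op y ∧ θT x y) with hθdef
  have hrT : ∀ {x y}, θ x y → θT (rr H x) (rr H y) := by
    rintro x y (rfl | ⟨hxB, hyB⟩ | ⟨hxT, hyT, ht⟩)
    · exact θT_refl (r_inT H x)
    · have h1 : θT (rr H x) b₀ := mem_classT (pow_mem x hxB (2 * up H x)) (r_inT H x)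
      have h2 : θT (rr H y) b₀ := mem_classT (pow_mem y hyB (2 * up H y)) (r_inT H y)
      exact θT_trans (r_inT H x) hb₀T (r_inT H y) h1 (θT_symm (r_inT H y) hb₀T h2)
    · rw [r_fix hassoc hab H hxT, r_fix hassoc hab H hyT]
      exact ht
  refine ⟨θ, ⟨fun x => Or.inl rfl, ?_, ?_⟩, ?_, b₀, ?_⟩
  · -- symm
    rintro x y (rfl | ⟨h1, h2⟩ | ⟨hx, hy, h⟩)
    · exact Or.inl rfl
    · exact Or.inr (Or.inl ⟨h2, h1⟩)
    · exact Or.inr (Or.inr ⟨hy, hx, θT_symm hx hy h⟩)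
  · -- trans
    rintro x y z h1 h2
    rcases h1 with rfl | ⟨hxB, hyB⟩ | ⟨hxT, hyT, ht1⟩
    · exact h2
    · rcases h2 with rfl | ⟨_, hzB⟩ | ⟨hyT, hzT, ht2⟩
      · exact Or.inr (Or.inl ⟨hxB, hyB⟩)
      · exact Or.inr (Or.inl ⟨hxB, hzB⟩)
      · have hz : z ∈ B := key_mem hzT (θT_trans hzT hyT hb₀T
          (θT_symm hyT hzT ht2) (mem_classT hyB hyT))
        exact Or.inr (Or.inl ⟨hxB, hz⟩)
    · rcases h2 with rfl | ⟨hyB, hzB⟩ | ⟨hyT', hzT, ht2⟩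
      · exact Or.inr (Or.inr ⟨hxT, hyT, ht1⟩)
      · have hx : x ∈ B := key_mem hxT (θT_trans hxT hyT hb₀T ht1
          (mem_classT hyB hyT))
        exact Or.inr (Or.inl ⟨hx, hzB⟩)
      · exact Or.inr (Or.inr ⟨hxT, hzT, θT_trans hxT hyT' hzT ht1 ht2⟩)
  · -- compat
    intro a b1 c d h1 h2
    refine Or.inr (Or.inr ⟨⟨a, c, rfl⟩, ⟨b1, d, rfl⟩, ?_⟩)
    rw [infl_mul hassoc H a c, infl_mul hassoc H b1 d]
    exact θT_compat (r_inT H a) (r_inT H b1) (r_inT H c) (r_inT H d) (hrT h1) (hrT h2)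
  · -- class
    ext x
    constructor
    · intro hx
      exact Or.inr (Or.inl ⟨hx, hb₀B⟩)
    · rintro (rfl | ⟨hxB, _⟩ | ⟨hxT, _, ht⟩)
      · exact hb₀B
      · exact hxB
      · exact key_mem hxT ht

/-! ### periodicity from the Hamiltonian property -/

lemma periodic_of_ham (hassoc : ∀ a b c : A, op (op a b) c = op a (op b c))
    (hham : ∀ B : Set A, B.Nonempty → (∀ x ∈ B, ∀ y ∈ B, op x y ∈ B) →
      ∃ θ : A → A → Prop, Equivalence θ ∧
        (∀ a b c d : A, θ a b → θ c d → θ (op a c) (op b d)) ∧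
        ∃ a : A, B = {x : A | θ x a}) :
    Periodik op := by
  intro a
  set Ba : Set A := {x | ∃ k, (k = 2 ∨ 4 ≤ k) ∧ opPow op a k = x} with hBa
  have hne : Ba.Nonempty := ⟨opPow op a 2, 2, Or.inl rfl, rfl⟩
  have hcl : ∀ x ∈ Ba, ∀ y ∈ Ba, op x y ∈ Ba := by
    rintro x ⟨k, hk, rfl⟩ y ⟨l, hl, rfl⟩
    refine ⟨k + l + 1, by omega, opPow_add hassoc a k l⟩
  obtain ⟨θ, hEq, hcomp, c, hc⟩ := hham Ba hne hcl
  have h2 : θ (opPow op a 2) c := by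
    have : opPow op a 2 ∈ Ba := ⟨2, Or.inl rfl, rfl⟩
    rw [hc] at this
    exact this
  have h4 : θ (opPow op a 4) c := by
    have : opPow op a 4 ∈ Ba := ⟨4, Or.inr (by omega), rfl⟩
    rw [hc] at this
    exact this
  have h24 : θ (opPow op a 2) (opPow op a 4) := hEq.trans h2 (hEq.symm h4)
  have h35 : θ (opPow op a 3) (opPow op a 5) := by
    have := hcomp a a _ _ (hEq.refl a) h24
    exact this
  have h5 : θ (opPow op a 5) c := by
    have : opPow op a 5 ∈ Ba := ⟨5, Or.inr (by omega), rfl⟩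
    rw [hc] at this
    exact this
  have h3 : opPow op a 3 ∈ Ba := by
    rw [hc]
    exact hEq.trans h35 h5
  obtain ⟨k, hk, hk3⟩ := h3
  rcases hk with rfl | hk4
  · exact ⟨2, 1, Nat.one_pos, hk3.symm⟩
  · refine ⟨3, k - 3, by omega, ?_⟩
    have : 3 + (k - 3) = k := by omega
    rw [this, hk3]

/-! ### periodicity from the structure -/

lemma periodic_of_structs (hassoc : ∀ a b c : A, op (op a b) c = op a (op b c))
    (T : Set A) (hinf : IsInflation op T) (hrect : IsRectBandOfPeriodicAbelianGroupsOn op T) :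
    Periodik op := by
  intro a
  obtain ⟨hTcl, X, hXmem, hXuni, hXprod⟩ := hinf
  obtain ⟨bb, hab', _⟩ := hXuni a
  set b : A := (bb : A) with hbdef
  have repL : ∀ y : A, op a y = op b y := by
    intro y
    obtain ⟨cc, hyc, _⟩ := hXuni y
    rw [hXprod bb cc a hab' y hyc, hXprod bb cc b (hXmem bb) y hyc]
  have repR : ∀ x : A, op x a = op x b := by
    intro x
    obtain ⟨cc, hxc, _⟩ := hXuni x
    rw [hXprod cc bb x hxc a hab', hXprod cc bb x hxc b (hXmem bb)]
  have hpow : ∀ n, opPow op a (n + 1) = opPow op b (n + 1) := by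
    intro n
    induction n with
    | zero =>
      show op a a = op b b
      rw [repL a, repR b]
    | succ k ih =>
      show op a (opPow op a (k + 1)) = op b (opPow op b (k + 1))
      rw [ih, repL]
  -- b is in a periodic group
  obtain ⟨ι, κ, P, hPne, hPpart, hPgrp, hPband⟩ := hrect
  have hbT : b ∈ T := bb.2
  obtain ⟨⟨i, l⟩, hbP, _⟩ := hPpart b hbT
  obtain ⟨hPcl, e, heP, hid, hinv, hcomm, hperiod⟩ := hPgrp i l
  obtain ⟨n, hn⟩ := hperiod b hbP
  have hee : op e e = e := (hid e heP).1
  have hb2 : opPow op b (n + (n + 1)) = opPow op b n := by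
    have h1 : n + (n + 1) = n + n + 1 := by omega
    rw [h1, opPow_add hassoc, hn, hee]
  refine ⟨n + 1, n + 1, by omega, ?_⟩
  have e1 : opPow op a (n + 1 + (n + 1)) = opPow op b (n + 1 + (n + 1)) := by
    have h2 : n + 1 + (n + 1) = (n + n + 1) + 1 := by omega
    rw [h2]
    exact hpow (n + n + 1)
  have e2 : opPow op b (n + 1 + (n + 1)) = opPow op b (n + 1) := by
    have h3 : n + 1 + (n + 1) = (n + (n + 1)) + 1 := by omega
    rw [h3]
    show op b (opPow op b (n + (n + 1))) = op b (opPow op b n)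
    rw [hb2]
  rw [e1, e2, hpow n]

end S19


/-- An Abelian semigroup is a Hamiltonian algebra iff it is an inflation of a
subsemigroup that is a rectangular band of periodic Abelian groups and the
product of any two idempotents is an idempotent. -/
theorem stmt_19 {A : Type u} (op : A → A → A)
    (hassoc : ∀ a b c : A, op (op a b) c = op a (op b c))
    (hab : IsAbelianGroupoid op) :
    IsHamiltonianGroupoid op ↔
      ((∃ T : Set A, IsInflation op T ∧ IsRectBandOfPeriodicAbelianGroupsOn op T) ∧
       (∀ e f : A, op e e = e → op f f = f → op (op e f) (op e f) = op e f)) := by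
  constructor
  · intro hham
    have hper : S19.Periodik op := S19.periodic_of_ham hassoc hham
    refine ⟨S19.main_structs hassoc hab hper, fun e f he hf => S19.idem_mul hassoc hab he hf⟩
  · rintro ⟨⟨T, hinf, hrect⟩, -⟩
    have hper := S19.periodic_of_structs hassoc T hinf hrect
    intro B hne hcl
    exact S19.hamiltonian_of hassoc hab hper B hne hcl
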